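/- Fix integers B ≥ 1 and 0 ≤ k ≤ B, and fix a subset W of {1,…,B} with |W| = B−k. Let σ be a uniformly random permutation (ordering) of {1,…,B}. Then for every integer 0 ≤ b ≤ B−k, the expected number of indices m ∈ {0,1,…,B} such that exactly b elements of W appear among the first m positions of σ equals (B+1)/(B−k+1). -/

import Mathlib

open Finset

/-- Vandermonde-type / hockey-stick identity:
`∑_{m=0}^{n} C(m,b) C(n-m,c) = C(n+1, b+c+1)`. -/
lemma stmt19_vand (b c : ℕ) : ∀ n : ℕ, ∑ m ∈ range (n+1), (m.choose b) * ((n-m).choose c)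
    = (n+1).choose (b+c+1) := by
  induction b with
  | zero =>
    intro n
    simp only [Nat.choose_zero_right, one_mul, Nat.zero_add]
    have h1 := Finset.sum_range_reflect (fun j => j.choose c) (n+1)
    simp only [Nat.add_sub_cancel] at h1
    rw [h1, ← Nat.sum_Icc_choose n c]
    refine (Finset.sum_subset (fun x hx => ?_) (fun x hx hnx => ?_)).symm
    · simp only [mem_Icc, mem_range] at *; omega
    · exact Nat.choose_eq_zero_of_lt (by simp only [mem_Icc, mem_range] at *; omega)
  | succ b ih =>
    intro n
    induction n with
    | zero => simp [Nat.choose_eq_zero_of_lt]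
    | succ n ihn =>
      rw [Finset.sum_range_succ' (fun m => (m.choose (b+1)) * ((n+1-m).choose c))]
      have e1 : ∀ x, ((x+1).choose (b+1)) * ((n+1-(x+1)).choose c)
          = x.choose (b+1) * ((n-x).choose c) + x.choose b * ((n-x).choose c) := by
        intro x
        rw [Nat.choose_succ_succ x b, Nat.succ_sub_succ]
        ring
      rw [Finset.sum_congr rfl (fun x _ => e1 x), Finset.sum_add_distrib, ihn, ih n]
      simp only [Nat.choose_succ_succ 0 b, Nat.choose_zero_right, Nat.choose_zero_succ]
      rw [show b+1+c+1 = (b+c+1)+1 by ring, Nat.choose_succ_succ (n+1) (b+c+1)]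
      ring

section aux
variable {α : Type*} [Fintype α] [DecidableEq α]

/-- Any two equinumerous finsets are related by a permutation of the ambient type. -/
lemma stmt19_exists_perm_image (S T : Finset α) (h : S.card = T.card) :
    ∃ τ : Equiv.Perm α, S.image ⇑τ = T := by
  have hc : (Sᶜ).card = (Tᶜ).card := by
    rw [Finset.card_compl, Finset.card_compl, h]
  let e : {x // x ∈ S} ≃ {x // x ∈ T} := Finset.equivOfCardEq h
  let f0 : {x // x ∈ Sᶜ} ≃ {x // x ∈ Tᶜ} := Finset.equivOfCardEq hc
  let eS : {x // ¬ x ∈ S} ≃ {x // x ∈ Sᶜ} :=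
    Equiv.subtypeEquivRight (fun x => (Finset.mem_compl).symm)
  let eT : {x // x ∈ Tᶜ} ≃ {x // ¬ x ∈ T} :=
    Equiv.subtypeEquivRight (fun x => Finset.mem_compl)
  let f : {x // ¬ x ∈ S} ≃ {x // ¬ x ∈ T} := (eS.trans f0).trans eT
  let τ : Equiv.Perm α :=
    ((Equiv.sumCompl (· ∈ S)).symm.trans ((Equiv.sumCongr e f).trans
      (Equiv.sumCompl (· ∈ T))))
  refine ⟨τ, ?_⟩
  have hsub : S.image ⇑τ ⊆ T := by
    intro y hy
    rw [Finset.mem_image] at hy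
    obtain ⟨x, hx, rfl⟩ := hy
    have : τ x = ↑(e ⟨x, hx⟩) := by
      simp only [τ, Equiv.trans_apply, Equiv.sumCompl_symm_apply_of_pos hx,
        Equiv.sumCongr_apply, Sum.map_inl, Equiv.sumCompl_apply_inl]
    rw [this]
    exact (e ⟨x, hx⟩).2
  refine Finset.eq_of_subset_of_card_le hsub ?_
  rw [Finset.card_image_of_injective _ τ.injective, h]

/-- The number of permutations mapping `A` onto `S` only depends on the
cardinality of `S`. -/
lemma stmt19_fib_congr (A S T : Finset α) (h : S.card = T.card) :
    ((univ : Finset (Equiv.Perm α)).filter (fun σ : Equiv.Perm α => A.image ⇑σ = S)).card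
      = ((univ : Finset (Equiv.Perm α)).filter (fun σ : Equiv.Perm α => A.image ⇑σ = T)).card := by
  obtain ⟨τ, hτ⟩ := stmt19_exists_perm_image S T h
  refine Finset.card_bij' (fun σ _ => σ.trans τ) (fun σ _ => σ.trans τ.symm) ?_ ?_ ?_ ?_
  · intro σ hσ
    rw [Finset.mem_filter] at hσ
    simp only [Finset.mem_filter, Finset.mem_univ, true_and]
    rw [show ⇑(σ.trans τ) = ⇑τ ∘ ⇑σ from rfl, ← Finset.image_image, hσ.2, hτ]
  · intro σ hσ
    rw [Finset.mem_filter] at hσ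
    simp only [Finset.mem_filter, Finset.mem_univ, true_and]
    rw [show ⇑(σ.trans τ.symm) = ⇑τ.symm ∘ ⇑σ from rfl, ← Finset.image_image, hσ.2, ← hτ,
      Finset.image_image]
    simp
  · intro σ _; ext x; simp
  · intro σ _; ext x; simp

/-- Counting `m`-subsets meeting `W` in exactly `b` elements. -/
lemma stmt19_cardQ (W : Finset α) (m b : ℕ) (hbm : b ≤ m) :
    (((univ : Finset α).powersetCard m).filter (fun S => (S ∩ W).card = b)).card
      = W.card.choose b * (Wᶜ).card.choose (m - b) := by
  rw [← Finset.card_powersetCard b W, ← Finset.card_powersetCard (m-b) (Wᶜ),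
    ← Finset.card_product]
  refine Finset.card_bij' (fun S _ => (S ∩ W, S \ W)) (fun P _ => P.1 ∪ P.2) ?_ ?_ ?_ ?_
  · intro S hS
    simp only [mem_filter, Finset.mem_powersetCard_univ] at hS
    obtain ⟨hcard, hint⟩ := hS
    have hsd : (S \ W).card = m - b := by
      have := Finset.card_inter_add_card_sdiff S W
      omega
    simp only [Finset.mem_product, Finset.mem_powersetCard]
    refine ⟨⟨Finset.inter_subset_right, hint⟩, ⟨?_, hsd⟩⟩
    intro x hx
    simp only [Finset.mem_sdiff] at hx
    simp [hx.2]
  · intro P hP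
    simp only [Finset.mem_product, Finset.mem_powersetCard] at hP
    obtain ⟨⟨h1, h2⟩, ⟨h3, h4⟩⟩ := hP
    have hdisj : Disjoint P.1 P.2 := by
      refine Finset.disjoint_left.2 (fun x hx1 hx2 => ?_)
      have := h3 hx2
      simp only [Finset.mem_compl] at this
      exact this (h1 hx1)
    have hPW : P.2 ∩ W = ∅ := by
      refine Finset.eq_empty_of_forall_notMem (fun x hx => ?_)
      simp only [Finset.mem_inter] at hx
      have := h3 hx.1
      simp only [Finset.mem_compl] at this
      exact this hx.2
    simp only [mem_filter, Finset.mem_powersetCard_univ]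
    constructor
    · rw [Finset.card_union_of_disjoint hdisj, h2, h4]; omega
    · rw [Finset.union_inter_distrib_right, hPW, Finset.union_empty,
        Finset.inter_eq_left.2 h1, h2]
  · intro S hS
    show S ∩ W ∪ S \ W = S
    ext x
    simp only [Finset.mem_union, Finset.mem_inter, Finset.mem_sdiff]
    tauto
  · intro P hP
    simp only [Finset.mem_product, Finset.mem_powersetCard] at hP
    obtain ⟨⟨h1, h2⟩, ⟨h3, h4⟩⟩ := hP
    have hPW : P.2 ∩ W = ∅ := by
      refine Finset.eq_empty_of_forall_notMem (fun x hx => ?_)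
      simp only [Finset.mem_inter] at hx
      have := h3 hx.1
      simp only [Finset.mem_compl] at this
      exact this hx.2
    have e1 : (P.1 ∪ P.2) ∩ W = P.1 := by
      rw [Finset.union_inter_distrib_right, hPW, Finset.union_empty,
        Finset.inter_eq_left.2 h1]
    have e2 : (P.1 ∪ P.2) \ W = P.2 := by
      rw [Finset.union_sdiff_distrib, Finset.sdiff_eq_empty_iff_subset.2 h1,
        Finset.empty_union, Finset.sdiff_eq_self_iff_disjoint.2 ?_]
      refine Finset.disjoint_left.2 (fun x hx1 hx2 => ?_)
      have h := Finset.eq_empty_iff_forall_notMem.1 hPW x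
      exact h (Finset.mem_inter.2 ⟨hx1, hx2⟩)
    show ((P.1 ∪ P.2) ∩ W, (P.1 ∪ P.2) \ W) = P
    rw [e1, e2]

lemma stmt19_cardQ_zero (W : Finset α) (m b : ℕ) (hbm : m < b) :
    (((univ : Finset α).powersetCard m).filter (fun S => (S ∩ W).card = b)).card = 0 := by
  rw [Finset.card_eq_zero, Finset.filter_eq_empty_iff]
  intro S hS
  rw [Finset.mem_powersetCard_univ] at hS
  intro h
  have : (S ∩ W).card ≤ S.card := Finset.card_le_card Finset.inter_subset_left
  omega
end aux

/-- Hypergeometric reweighting identity, real-valued. -/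
lemma stmt19_keyid (w k b m : ℕ) (hbw : b ≤ w) (hbm : b ≤ m) (hmk : m ≤ b + k) :
    (w.choose b : ℝ) * (k.choose (m-b)) * ((w+k).choose w)
      = (m.choose b) * ((w+k-m).choose (w-b)) * ((w+k).choose m) := by
  have h2 : m - b ≤ k := by omega
  have h3 : w ≤ w + k := by omega
  have h4 : m ≤ w + k := by omega
  have h5 : w - b ≤ w + k - m := by omega
  have e1 : w + k - w = k := by omega
  have e2 : w + k - m - (w - b) = k - (m - b) := by omega
  rw [Nat.cast_choose ℝ hbw, Nat.cast_choose ℝ h2, Nat.cast_choose ℝ h3,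
    Nat.cast_choose ℝ hbm, Nat.cast_choose ℝ h5, Nat.cast_choose ℝ h4, e1, e2]
  have f : ∀ n : ℕ, (n.factorial : ℝ) ≠ 0 := fun n => Nat.cast_ne_zero.2 n.factorial_ne_zero
  field_simp


lemma stmt19_stepB (B : ℕ) (W : Finset (Fin B)) (b : ℕ) :
    ∀ m ∈ Finset.range (B+1),
      ((univ : Finset (Equiv.Perm (Fin B))).filter
        (fun σ => (Finset.univ.filter
          (fun i : Fin B => (i : ℕ) < m ∧ σ i ∈ W)).card = b)).card * B.choose m
      = (((univ : Finset (Fin B)).powersetCard m).filter (fun S => (S ∩ W).card = b)).card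
          * B.factorial := by
  intro m hm
  rw [Finset.mem_range] at hm
  have hmB : m ≤ B := by omega
  set A : Finset (Fin B) := univ.filter (fun i : Fin B => (i : ℕ) < m) with hA
  have hAval : A.image Fin.val = Finset.range m := by
    ext x
    simp only [hA, Finset.mem_image, Finset.mem_filter, Finset.mem_univ, true_and,
      Finset.mem_range]
    constructor
    · rintro ⟨i, hi, rfl⟩; exact hi
    · intro hx; exact ⟨⟨x, lt_of_lt_of_le hx hmB⟩, hx, rfl⟩
  have hAcard : A.card = m := by
    rw [← Finset.card_range m, ← hAval, Finset.card_image_of_injective _ Fin.val_injective]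
  have hkey : ∀ σ : Equiv.Perm (Fin B),
      (Finset.univ.filter (fun i : Fin B => (i : ℕ) < m ∧ σ i ∈ W)).card
        = ((A.image ⇑σ) ∩ W).card := by
    intro σ
    rw [← Finset.filter_mem_eq_inter, Finset.filter_image,
      Finset.card_image_of_injective _ σ.injective, hA, Finset.filter_filter]
  have himg : ∀ σ : Equiv.Perm (Fin B), (A.image ⇑σ).card = m := by
    intro σ
    rw [Finset.card_image_of_injective _ σ.injective, hAcard]
  set Q := ((univ : Finset (Fin B)).powersetCard m).filter (fun S => (S ∩ W).card = b) with hQ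
  set fib : Finset (Fin B) → ℕ := fun S =>
    ((univ : Finset (Equiv.Perm (Fin B))).filter
      (fun σ : Equiv.Perm (Fin B) => A.image ⇑σ = S)).card with hfib
  have hNm : ((univ : Finset (Equiv.Perm (Fin B))).filter
      (fun σ => (Finset.univ.filter
        (fun i : Fin B => (i : ℕ) < m ∧ σ i ∈ W)).card = b)).card = ∑ S ∈ Q, fib S := by
    rw [Finset.card_eq_sum_card_fiberwise
      (f := fun σ : Equiv.Perm (Fin B) => A.image ⇑σ) (t := Q)
      (fun σ hσ => by
        rw [Finset.mem_coe, Finset.mem_filter] at hσ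
        rw [Finset.mem_coe, hQ, Finset.mem_filter, Finset.mem_powersetCard_univ]
        exact ⟨himg σ, by rw [← hkey σ]; exact hσ.2⟩)]
    refine Finset.sum_congr rfl (fun S hS => ?_)
    rw [Finset.filter_filter, hfib]
    congr 1
    refine Finset.filter_congr (fun σ _ => ?_)
    rw [hQ, Finset.mem_filter, Finset.mem_powersetCard_univ] at hS
    constructor
    · rintro ⟨_, h2⟩; exact h2
    · intro h2
      refine ⟨?_, h2⟩
      rw [hkey σ, h2, hS.2]
  have hfibA : ∀ S ∈ Q, fib S = fib A := by
    intro S hS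
    rw [hQ, Finset.mem_filter, Finset.mem_powersetCard_univ] at hS
    exact stmt19_fib_congr A S A (by rw [hS.1, hAcard])
  have hNm2 : ((univ : Finset (Equiv.Perm (Fin B))).filter
      (fun σ => (Finset.univ.filter
        (fun i : Fin B => (i : ℕ) < m ∧ σ i ∈ W)).card = b)).card = Q.card * fib A := by
    rw [hNm, Finset.sum_congr rfl hfibA, Finset.sum_const, smul_eq_mul]
  have hfact : B.choose m * fib A = B.factorial := by
    have h0 : (univ : Finset (Equiv.Perm (Fin B))).card
        = ∑ S ∈ (univ : Finset (Fin B)).powersetCard m, fib S := by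
      rw [Finset.card_eq_sum_card_fiberwise
        (f := fun σ : Equiv.Perm (Fin B) => A.image ⇑σ)
        (t := (univ : Finset (Fin B)).powersetCard m)
        (fun σ _ => by rw [Finset.mem_coe, Finset.mem_powersetCard_univ]; exact himg σ)]
    have h1 : ∀ S ∈ (univ : Finset (Fin B)).powersetCard m, fib S = fib A := by
      intro S hS
      rw [Finset.mem_powersetCard_univ] at hS
      exact stmt19_fib_congr A S A (by rw [hS, hAcard])
    rw [Finset.sum_congr rfl h1, Finset.sum_const, smul_eq_mul,
      Finset.card_powersetCard] at h0
    simp only [Finset.card_univ, Fintype.card_perm, Fintype.card_fin] at h0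
    exact h0.symm
  rw [hNm2, mul_assoc, mul_comm (fib A), hfact]

lemma stmt19_stepC (B k b w : ℕ) (hB : 1 ≤ B) (hk : k ≤ B) (hbw : b ≤ w) (hwk : w + k = B)
    (Qc N : ℕ → ℕ)
    (hQval : ∀ m, b ≤ m → Qc m = w.choose b * k.choose (m-b))
    (hQzero : ∀ m, m < b → Qc m = 0)
    (hQN : ∀ m ∈ range (B+1), N m * B.choose m = Qc m * B.factorial) :
    ((∑ m ∈ range (B+1), N m : ℕ) : ℝ) / B.factorial = ((B:ℝ)+1)/((B:ℝ)-k+1) := by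
  have hwB : w ≤ B := by omega
  have hFne : (B.factorial : ℝ) ≠ 0 := Nat.cast_ne_zero.2 B.factorial_ne_zero
  have hCw : (B.choose w : ℝ) ≠ 0 :=
    Nat.cast_ne_zero.2 (Nat.choose_pos hwB).ne'
  have hrhs : (B:ℝ) - k + 1 = (w:ℝ) + 1 := by
    have : (w:ℝ) = (B:ℝ) - (k:ℝ) := by
      rw [show w = B - k by omega, Nat.cast_sub hk]
    rw [this]
  rw [hrhs, Nat.cast_sum, Finset.sum_div]
  have hterm : ∀ m ∈ range (B+1), (N m : ℝ) / B.factorial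
      = ((m.choose b * (B-m).choose (w-b) : ℕ) : ℝ) / (B.choose w : ℝ) := by
    intro m hm
    rw [mem_range] at hm
    have hmB : m ≤ B := by omega
    have hCm : (B.choose m : ℝ) ≠ 0 := Nat.cast_ne_zero.2 (Nat.choose_pos hmB).ne'
    have h1 : (N m : ℝ) * (B.choose m : ℝ) = (Qc m : ℝ) * (B.factorial : ℝ) := by
      exact_mod_cast congrArg (Nat.cast : ℕ → ℝ) (hQN m (mem_range.2 hm))
    have h2 : (N m : ℝ) / B.factorial = (Qc m : ℝ) / (B.choose m : ℝ) := by
      rw [div_eq_div_iff hFne hCm]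
      linarith [h1]
    rw [h2, div_eq_div_iff hCm hCw]
    -- show (Qc m : ℝ) * C(B,w) = C(m,b)*C(B-m,w-b) * C(B,m)
    rcases lt_or_ge m b with hlt | hge
    · rw [hQzero m hlt, Nat.choose_eq_zero_of_lt hlt]
      push_cast
      ring
    · rcases le_or_gt m (b + k) with hle | hgt
      · rw [hQval m hge]
        have := stmt19_keyid w k b m hbw hge hle
        rw [hwk] at this
        push_cast
        push_cast at this
        linarith [this]
      · rw [hQval m hge, Nat.choose_eq_zero_of_lt (show k < m - b by omega),
          Nat.choose_eq_zero_of_lt (show B - m < w - b by omega)]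
        push_cast
        ring
  rw [Finset.sum_congr rfl hterm, ← Finset.sum_div, ← Nat.cast_sum,
    Finset.sum_congr rfl (fun m _ => rfl), stmt19_vand b (w-b) B,
    show b + (w-b) + 1 = w + 1 by omega]
  rw [div_eq_div_iff hCw (by positivity)]
  exact_mod_cast (Nat.add_one_mul_choose_eq B w).symm

/-- fix `B ≥ 1`, `0 ≤ k ≤ B` and a set `W` of white balls with
`|W| = B - k`. For a uniformly random ordering `σ` of the `B` balls and every
`0 ≤ b ≤ B - k`, the expected number of indices `m ∈ {0, 1, …, B}` such that
exactly `b` white balls appear among the first `m` positions of `σ` equals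
`(B+1)/(B-k+1)`. -/
theorem stmt19 (B k b : ℕ) (hB : 1 ≤ B) (hk : k ≤ B) (W : Finset (Fin B))
    (hW : W.card = B - k) (hb : b ≤ B - k) :
    ((∑ σ : Equiv.Perm (Fin B),
        ((Finset.range (B + 1)).filter (fun m =>
          (Finset.univ.filter (fun i : Fin B => (i : ℕ) < m ∧ σ i ∈ W)).card = b)).card
        : ℕ) : ℝ) / (Nat.factorial B)
      = ((B : ℝ) + 1) / ((B : ℝ) - k + 1) := by
  set w := B - k with hw
  have hbw : b ≤ w := hb
  have hwk : w + k = B := by omega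
  have hWc : (Wᶜ).card = k := by
    rw [Finset.card_compl, hW, Fintype.card_fin]; omega
  have hswap : (∑ σ : Equiv.Perm (Fin B),
      ((Finset.range (B + 1)).filter (fun m =>
        (Finset.univ.filter (fun i : Fin B => (i : ℕ) < m ∧ σ i ∈ W)).card = b)).card)
      = ∑ m ∈ Finset.range (B+1),
          ((univ : Finset (Equiv.Perm (Fin B))).filter
            (fun σ => (Finset.univ.filter
              (fun i : Fin B => (i : ℕ) < m ∧ σ i ∈ W)).card = b)).card := by
    simp only [Finset.card_filter]
    rw [Finset.sum_comm]
  have hQN := stmt19_stepB B W b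
  have hQval : ∀ m, b ≤ m →
      (((univ : Finset (Fin B)).powersetCard m).filter (fun S => (S ∩ W).card = b)).card
        = w.choose b * k.choose (m-b) := by
    intro m hm
    rw [stmt19_cardQ W m b hm, hW, hWc]
  have hQzero := fun (m : ℕ) (hm : m < b) => stmt19_cardQ_zero W m b hm
  rw [hswap]
  have hwB : w ≤ B := by omega
  have hFne : (B.factorial : ℝ) ≠ 0 := Nat.cast_ne_zero.2 B.factorial_ne_zero
  have hCw : (B.choose w : ℝ) ≠ 0 := Nat.cast_ne_zero.2 (Nat.choose_pos hwB).ne'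
  have hrhs : (B:ℝ) - k + 1 = (w:ℝ) + 1 := by
    have : (w:ℝ) = (B:ℝ) - (k:ℝ) := by
      rw [show w = B - k from hw, Nat.cast_sub hk]
    rw [this]
  rw [hrhs, Nat.cast_sum, Finset.sum_div]
  have hterm : ∀ m ∈ Finset.range (B+1),
      ((((univ : Finset (Equiv.Perm (Fin B))).filter
        (fun σ => (Finset.univ.filter
          (fun i : Fin B => (i : ℕ) < m ∧ σ i ∈ W)).card = b)).card : ℝ)) / B.factorial
      = ((m.choose b * (B-m).choose (w-b) : ℕ) : ℝ) / (B.choose w : ℝ) := by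
    intro m hm
    rw [Finset.mem_range] at hm
    have hmB : m ≤ B := by omega
    have hCm : (B.choose m : ℝ) ≠ 0 := Nat.cast_ne_zero.2 (Nat.choose_pos hmB).ne'
    have h1 := congrArg (Nat.cast : ℕ → ℝ) (hQN m (Finset.mem_range.2 hm))
    push_cast at h1
    have h2 : ((((univ : Finset (Equiv.Perm (Fin B))).filter
        (fun σ => (Finset.univ.filter
          (fun i : Fin B => (i : ℕ) < m ∧ σ i ∈ W)).card = b)).card : ℝ)) / B.factorial
        = ((((univ : Finset (Fin B)).powersetCard m).filter
            (fun S => (S ∩ W).card = b)).card : ℝ) / (B.choose m : ℝ) := by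
      rw [div_eq_div_iff hFne hCm]
      linarith [h1]
    rw [h2, div_eq_div_iff hCm hCw]
    rcases lt_or_ge m b with hlt | hge
    · rw [hQzero m hlt, Nat.choose_eq_zero_of_lt hlt]
      push_cast
      ring
    · rcases le_or_gt m (b + k) with hle | hgt
      · rw [hQval m hge]
        have h3 := stmt19_keyid w k b m hbw hge hle
        rw [hwk] at h3
        push_cast
        push_cast at h3
        linarith [h3]
      · rw [hQval m hge, Nat.choose_eq_zero_of_lt (show k < m - b by omega),
          Nat.choose_eq_zero_of_lt (show B - m < w - b by omega)]
        push_cast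
        ring
  rw [Finset.sum_congr rfl hterm, ← Finset.sum_div, ← Nat.cast_sum,
    stmt19_vand b (w-b) B, show b + (w-b) + 1 = w + 1 by omega]
  rw [div_eq_div_iff hCw (by positivity)]
  exact_mod_cast (Nat.add_one_mul_choose_eq B w).symm
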